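/- Let A be an abelian category whose derived category D(A) has Hom sets, and let τ = (U, U^⊥[1]) be a t-structure on D(A) with D(A)^{≤ -n} ⊆ U ⊆ D(A)^{≤ 0} for some natural number n. Set Y := A ∩ H_τ, where H_τ is the heart of τ and A is identified with the heart of the natural t-structure. If Y^• is a bounded complex 0 → Y^{-s} → Y^{-s+1} → ⋯ → Y^{-1} → Y^0 → 0 with all terms in Y, then Y^•, viewed as an object of D(A), lies in δ^{[-s,0]} ∩ τ^{[-s,0]}, i.e. in D(A)^{≤0} ∩ D(A)^{≥ -s} ∩ U ∩ U^⊥[1+s]. -/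

import Mathlib

open CategoryTheory Limits Pretriangulated

universe w v u

/-- A t-structure `(U, V)` on a triangulated category `D`, described by two strictly full
subcategories with the usual axioms. -/
structure TSPair (D : Type*) [Category D] [Preadditive D] [HasZeroObject D]
    [HasShift D ℤ] [∀ n : ℤ, (shiftFunctor D n).Additive] [Pretriangulated D]
    (U V : Set D) : Prop where
  iso_U : ∀ ⦃X Y : D⦄, (X ≅ Y) → X ∈ U → Y ∈ U
  iso_V : ∀ ⦃X Y : D⦄, (X ≅ Y) → X ∈ V → Y ∈ V
  hom_zero : ∀ ⦃X Y : D⦄, X ∈ U → Y ∈ V → ∀ f : X ⟶ Y⟦(-1 : ℤ)⟧, f = 0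
  shift_U : ∀ ⦃X : D⦄, X ∈ U → X⟦(1 : ℤ)⟧ ∈ U
  tri : ∀ X : D, ∃ (A B : D) (f : A ⟶ X) (g : X ⟶ B) (h : B ⟶ A⟦(1 : ℤ)⟧),
    A ∈ U ∧ B⟦(1 : ℤ)⟧ ∈ V ∧ Triangle.mk f g h ∈ distTriang D

section TS

variable {D : Type*} [Category D] [Preadditive D] [HasZeroObject D]
    [HasShift D ℤ] [∀ n : ℤ, (shiftFunctor D n).Additive] [Pretriangulated D]
    {U V : Set D}

lemma TSPair.hom_zero' (τ : TSPair D U V) {X W : D} (hX : X ∈ U) (hW : W⟦(1:ℤ)⟧ ∈ V) (f : X ⟶ W) : f = 0 := by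
  have h := τ.hom_zero hX hW
    (f ≫ (shiftFunctorCompIsoId D (1:ℤ) (-1:ℤ) (by ring)).inv.app W)
  have h2 : f = (f ≫ (shiftFunctorCompIsoId D (1:ℤ) (-1:ℤ) (by ring)).inv.app W) ≫
      (shiftFunctorCompIsoId D (1:ℤ) (-1:ℤ) (by ring)).hom.app W := by simp
  rw [h2, h, zero_comp]

lemma TSPair.mem_U_of (τ : TSPair D U V) {X : D}
    (h : ∀ W : D, W⟦(1:ℤ)⟧ ∈ V → ∀ f : X ⟶ W, f = 0) : X ∈ U := by
  obtain ⟨A, B, f, g, h', hA, hB, hT⟩ := τ.tri X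
  obtain ⟨φ, hφ⟩ := Triangle.yoneda_exact₃ _ hT (𝟙 B) ((Category.comp_id g).trans (h B hB g))
  have hφ0 : φ = 0 := τ.hom_zero' (τ.shift_U hA) hB φ
  have hB0 : IsZero B := by
    rw [IsZero.iff_id_eq_zero, hφ, hφ0, comp_zero]; rfl
  have : IsIso f := (Triangle.isZero₃_iff_isIso₁ _ hT).1 hB0
  exact τ.iso_U (asIso f) hA

lemma TSPair.mem_V_of (τ : TSPair D U V) {W : D}
    (h : ∀ X ∈ U, ∀ f : X ⟶ W⟦(-1:ℤ)⟧, f = 0) : W ∈ V := by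
  obtain ⟨A, B, f, g, h', hA, hB, hT⟩ := τ.tri (W⟦(-1:ℤ)⟧)
  have hT' := inv_rot_of_distTriang _ hT
  obtain ⟨σ, hσ⟩ := Triangle.coyoneda_exact₂ _ hT' (𝟙 A) ((Category.id_comp f).trans (h A hA f))
  have hσ0 : σ = 0 := by
    have h2 : (shiftFunctor D (1:ℤ)).map σ ≫
        (shiftFunctorCompIsoId D (-1:ℤ) (1:ℤ) (by ring)).hom.app B = 0 :=
      τ.hom_zero' (τ.shift_U hA) hB _
    apply (shiftFunctor D (1:ℤ)).map_injective
    exact (cancel_mono ((shiftFunctorCompIsoId D (-1:ℤ) (1:ℤ) (by ring)).hom.app B)).1 (h2.trans (by erw [Functor.map_zero, zero_comp]))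
  have hA0 : IsZero A := by
    rw [IsZero.iff_id_eq_zero, hσ, hσ0, zero_comp]; rfl
  have : IsIso g := (Triangle.isZero₁_iff_isIso₂ _ hT).1 hA0
  exact τ.iso_V (((shiftFunctor D (1:ℤ)).mapIso (asIso g).symm) ≪≫
    (shiftFunctorCompIsoId D (-1:ℤ) (1:ℤ) (by ring)).app W) hB

lemma TSPair.ext_U (τ : TSPair D U V) {T : Triangle D} (hT : T ∈ distTriang D)
    (h₁ : T.obj₁ ∈ U) (h₃ : T.obj₃ ∈ U) : T.obj₂ ∈ U := by
  refine τ.mem_U_of (fun W hW f => ?_)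
  obtain ⟨g, hg⟩ := Triangle.yoneda_exact₂ _ hT f (τ.hom_zero' h₁ hW _)
  rw [hg, τ.hom_zero' h₃ hW g, comp_zero]

lemma TSPair.ext_V (τ : TSPair D U V) {T : Triangle D} (hT : T ∈ distTriang D)
    (h₁ : T.obj₁ ∈ V) (h₃ : T.obj₃ ∈ V) : T.obj₂ ∈ V := by
  refine τ.mem_V_of (fun X hX f => ?_)
  have hT2 : (CategoryTheory.shiftFunctor (Triangle D) (-1:ℤ)).obj T ∈ distTriang D :=
    Triangle.shift_distinguished T hT (-1:ℤ)
  obtain ⟨g, hg⟩ := Triangle.coyoneda_exact₂ _ hT2 f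
    (τ.hom_zero hX h₃ (f ≫ ((CategoryTheory.shiftFunctor (Triangle D) (-1:ℤ)).obj T).mor₂))
  rw [hg, τ.hom_zero hX h₁ g]; exact zero_comp

lemma TSPair.shift_U_nat (τ : TSPair D U V) {X : D} (hX : X ∈ U) (m : ℕ) : X⟦(m:ℤ)⟧ ∈ U := by
  induction m with
  | zero =>
    rw [show ((0:ℕ):ℤ) = (0:ℤ) by norm_num]
    exact τ.iso_U ((shiftFunctorZero D ℤ).symm.app X) hX
  | succ k ih =>
    rw [show ((k+1:ℕ):ℤ) = (k:ℤ)+1 by push_cast; ring]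
    exact τ.iso_U ((shiftFunctorAdd' D (k:ℤ) 1 ((k:ℤ)+1) rfl).app X).symm (τ.shift_U ih)

lemma TSPair.shift_V_neg_one (τ : TSPair D U V) {W : D} (hW : W ∈ V) : W⟦(-1:ℤ)⟧ ∈ V := by
  refine τ.mem_V_of (fun X hX f => ?_)
  have h2 : (shiftFunctor D (1:ℤ)).map f ≫
      (shiftFunctorCompIsoId D (-1:ℤ) (1:ℤ) (by ring)).hom.app (W⟦(-1:ℤ)⟧) = 0 :=
    τ.hom_zero (τ.shift_U hX) hW _
  apply (shiftFunctor D (1:ℤ)).map_injective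
  rw [← cancel_mono ((shiftFunctorCompIsoId D (-1:ℤ) (1:ℤ) (by ring)).hom.app (W⟦(-1:ℤ)⟧))]
  simpa using h2

lemma TSPair.shift_V_nat (τ : TSPair D U V) {W : D} (hW : W ∈ V) (m : ℕ) : W⟦-(m:ℤ)⟧ ∈ V := by
  induction m with
  | zero =>
    rw [show -((0:ℕ):ℤ) = (0:ℤ) by norm_num]
    exact τ.iso_V ((shiftFunctorZero D ℤ).symm.app W) hW
  | succ k ih =>
    rw [show -((k+1:ℕ):ℤ) = -(k:ℤ)-1 by push_cast; ring]
    exact τ.iso_V ((shiftFunctorAdd' D (-(k:ℤ)) (-1) (-(k:ℤ)-1) (by ring)).app W).symm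
      (τ.shift_V_neg_one ih)

lemma TSPair.zero_mem_U (τ : TSPair D U V) {X : D} (hX : IsZero X) : X ∈ U :=
  τ.mem_U_of (fun W _ f => hX.eq_of_src f 0)

lemma TSPair.zero_mem_V (τ : TSPair D U V) {W : D} (hW : IsZero W) : W ∈ V :=
  τ.mem_V_of (fun X _ f => (((shiftFunctor D (-1:ℤ)).map_isZero hW).eq_of_tgt f 0))

end TS

section Drop

variable (C : Type u) [Category.{v} C] [Abelian C]

open ZeroObject HomologicalComplex

/-- The complex `K` with the degree `p` term replaced by `0`. -/
noncomputable def drop (K : CochainComplex C ℤ) (p : ℤ) : CochainComplex C ℤ where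
  X i := if i = p then 0 else K.X i
  d i j :=
    if hi : i = p then 0
    else if hj : j = p then 0
    else eqToHom (by rw [if_neg hi]) ≫ K.d i j ≫
      eqToHom (by rw [if_neg hj])
  shape i j hij := by
    by_cases hi : i = p <;> by_cases hj : j = p <;> simp [hi, hj, K.shape i j hij]
  d_comp_d' i j k _ _ := by
    by_cases hi : i = p <;> by_cases hj : j = p <;> by_cases hk : k = p <;>
      simp [hi, hj, hk]

/-- The inclusion of `drop C K p` into `K`, when all differentials into degree `p` vanish. -/
noncomputable def dropι (K : CochainComplex C ℤ) (p : ℤ) (hd : ∀ i, K.d i p = 0) :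
    drop C K p ⟶ K where
  f i := if hi : i = p then 0 else eqToHom (by dsimp [drop]; rw [if_neg hi])
  comm' i j _ := by
    dsimp [drop]
    by_cases hi : i = p
    · simp [hi]; exact zero_comp
    · by_cases hj : j = p
      · subst hj
        simp [hi, hd]; exact zero_comp.symm
      · simp [hi, hj]; erw [eqToHom_trans, eqToHom_refl, Category.comp_id]

/-- The projection of `K` onto the single complex given by its degree `p` term. -/
noncomputable def dropπ (K : CochainComplex C ℤ) (p : ℤ) (hd : ∀ i, K.d i p = 0) :
    K ⟶ (HomologicalComplex.single C (ComplexShape.up ℤ) p).obj (K.X p) where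
  f i := if hi : i = p then
      eqToHom (by rw [hi]) ≫ (singleObjXSelf (ComplexShape.up ℤ) p (K.X p)).inv ≫
        eqToHom (by rw [hi])
    else 0
  comm' i j _ := by
    rw [HomologicalComplex.single_obj_d, comp_zero]
    by_cases h : j = p
    · rw [dif_pos h]
      subst h
      rw [hd, zero_comp]
    · rw [dif_neg h, comp_zero]

lemma mono_of_isZero_src {A : Type*} [Category A] [Limits.HasZeroMorphisms A]
    {X Y : A} (h : IsZero X) (f : X ⟶ Y) : Mono f :=
  ⟨fun _ _ _ => h.eq_of_tgt _ _⟩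

lemma epi_of_isZero_tgt {A : Type*} [Category A] [Limits.HasZeroMorphisms A]
    {X Y : A} (h : IsZero Y) (f : X ⟶ Y) : Epi f :=
  ⟨fun _ _ _ => h.eq_of_src _ _⟩

/-- The short complex `drop C K p ⟶ K ⟶ single_p (K.X p)`. -/
noncomputable def dropSC (K : CochainComplex C ℤ) (p : ℤ) (hd : ∀ i, K.d i p = 0) :
    ShortComplex (CochainComplex C ℤ) :=
  ShortComplex.mk (dropι C K p hd) (dropπ C K p hd) (by
    ext i
    dsimp [dropι, dropπ]
    split_ifs <;> simp)

lemma dropSC_shortExact (K : CochainComplex C ℤ) (p : ℤ) (hd : ∀ i, K.d i p = 0) :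
    (dropSC C K p hd).ShortExact := by
  apply HomologicalComplex.shortExact_of_degreewise_shortExact
  intro i
  by_cases hi : i = p
  · subst hi
    have hsrc : IsZero ((drop C K i).X i) := by
      dsimp [drop]; rw [if_pos rfl]; exact isZero_zero C
    have hf : ((dropSC C K i hd).map (HomologicalComplex.eval C _ i)).f = 0 :=
      hsrc.eq_of_src _ _
    have hg : IsIso ((dropSC C K i hd).map (HomologicalComplex.eval C _ i)).g := by
      show IsIso ((dropπ C K i hd).f i)
      dsimp [dropπ]
      split_ifs with h
      · infer_instance
      · exact absurd rfl h
    exact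
      { exact := (ShortComplex.exact_iff_mono _ hf).2 inferInstance
        mono_f := mono_of_isZero_src hsrc _
        epi_g := inferInstance }
  · have htgt : IsZero (((HomologicalComplex.single C (ComplexShape.up ℤ) p).obj (K.X p)).X i) :=
      HomologicalComplex.isZero_single_obj_X _ p (K.X p) i hi
    have hg : ((dropSC C K p hd).map (HomologicalComplex.eval C _ i)).g = 0 :=
      htgt.eq_of_tgt _ _
    have hf : IsIso ((dropSC C K p hd).map (HomologicalComplex.eval C _ i)).f := by
      show IsIso ((dropι C K p hd).f i)
      dsimp [dropι]
      rw [dif_neg hi]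
      infer_instance
    exact
      { exact := (ShortComplex.exact_iff_epi _ hg).2 inferInstance
        mono_f := inferInstance
        epi_g := epi_of_isZero_tgt htgt _ }

end Drop

variable (C : Type u) [Category.{v} C] [Abelian C] [HasDerivedCategory.{w} C]

/-- Membership in `D(A)^{≤ m}`: the homology vanishes in degrees `> m`. -/
def natLE (m : ℤ) (X : DerivedCategory C) : Prop :=
  ∀ k : ℤ, m < k → IsZero ((DerivedCategory.homologyFunctor C k).obj X)

/-- Membership in `D(A)^{≥ m}`: the homology vanishes in degrees `< m`. -/
def natGE (m : ℤ) (X : DerivedCategory C) : Prop :=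
  ∀ k : ℤ, k < m → IsZero ((DerivedCategory.homologyFunctor C k).obj X)

/-- An object `A₀` of the abelian category `C` belongs to `Y = A ∩ H_τ`, the class of
objects of `A` lying in the heart `H_τ = U ∩ V` of the t-structure `(U, V)` on `D(A)`,
`A` being identified with the heart of the natural t-structure via the functor
sending `A₀` to the complex `A₀` concentrated in degree `0`. -/
def memY (U V : Set (DerivedCategory C)) (A₀ : C) : Prop :=
  (DerivedCategory.singleFunctor C 0).obj A₀ ∈ U ∧
    (DerivedCategory.singleFunctor C 0).obj A₀ ∈ V

lemma main_induction (U V : Set (DerivedCategory C)) (τ : TSPair (DerivedCategory C) U V)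
    (t : ℕ) :
    ∀ (K : CochainComplex C ℤ),
      (∀ i : ℤ, (i ≤ -(t:ℤ) ∨ 0 < i) → IsZero (K.X i)) →
      (∀ i : ℤ, -(t:ℤ) < i → i ≤ 0 → memY C U V (K.X i)) →
      DerivedCategory.Q.obj K ∈ U ∧ (DerivedCategory.Q.obj K)⟦(1:ℤ)-(t:ℤ)⟧ ∈ V := by
  induction t with
  | zero =>
    intro K hz _
    have hKz : IsZero K := by
      rw [IsZero.iff_id_eq_zero]
      ext i
      exact (hz i (by omega)).eq_of_src _ _
    have hK : IsZero (DerivedCategory.Q.obj K) :=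
      Functor.map_isZero _ hKz
    exact ⟨τ.zero_mem_U hK, τ.zero_mem_V (Functor.map_isZero _ hK)⟩
  | succ t ih =>
    intro K hz hY
    have hd : ∀ i, K.d i (-(t:ℤ)) = 0 := by
      intro i
      by_cases hri : i + 1 = -(t:ℤ)
      · exact (hz i (Or.inl (by push_cast; omega))).eq_of_src _ _
      · exact K.shape i _ (by simpa using hri)
    have hz' : ∀ i : ℤ, (i ≤ -(t:ℤ) ∨ 0 < i) → IsZero ((drop C K (-(t:ℤ))).X i) := by
      intro i hi
      by_cases h : i = -(t:ℤ)
      · dsimp [drop]; rw [if_pos h]; exact isZero_zero C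
      · dsimp [drop]; rw [if_neg h]
        refine hz i ?_
        rcases hi with h1 | h1
        · exact Or.inl (by push_cast; omega)
        · exact Or.inr h1
    have hY' : ∀ i : ℤ, -(t:ℤ) < i → i ≤ 0 → memY C U V ((drop C K (-(t:ℤ))).X i) := by
      intro i h1 h2
      have h : ¬ (i = -(t:ℤ)) := by omega
      have e : (drop C K (-(t:ℤ))).X i = K.X i := by dsimp [drop]; rw [if_neg h]
      rw [e]
      exact hY i (by push_cast; omega) h2
    obtain ⟨ihU, ihV⟩ := ih (drop C K (-(t:ℤ))) hz' hY'
    have hYp : memY C U V (K.X (-(t:ℤ))) := hY _ (by push_cast; omega) (by omega)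
    have hS := dropSC_shortExact C K (-(t:ℤ)) hd
    have hT := DerivedCategory.triangleOfSES_distinguished hS
    have e1 : DerivedCategory.Q.obj
        ((HomologicalComplex.single C (ComplexShape.up ℤ) (-(t:ℤ))).obj (K.X (-(t:ℤ)))) ≅
        (DerivedCategory.singleFunctor C (-(t:ℤ))).obj (K.X (-(t:ℤ))) :=
      (((SingleFunctors.evaluation _ _ (-(t:ℤ))).mapIso
        (DerivedCategory.singleFunctorsPostcompQIso C)).app (K.X (-(t:ℤ)))).symm
    have e2 : ((DerivedCategory.singleFunctor C 0).obj (K.X (-(t:ℤ))))⟦(t:ℤ)⟧ ≅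
        (DerivedCategory.singleFunctor C (-(t:ℤ))).obj (K.X (-(t:ℤ))) :=
      ((DerivedCategory.singleFunctors C).shiftIso (t:ℤ) (-(t:ℤ)) 0 (by omega)).app _
    have h3U : DerivedCategory.Q.obj
        ((HomologicalComplex.single C (ComplexShape.up ℤ) (-(t:ℤ))).obj (K.X (-(t:ℤ)))) ∈ U :=
      τ.iso_U e1.symm (τ.iso_U e2 (τ.shift_U_nat hYp.1 t))
    constructor
    · exact τ.ext_U hT ihU h3U
    · rw [show (1:ℤ) - ((t+1:ℕ):ℤ) = -(t:ℤ) by push_cast; ring]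
      have hT2 := Triangle.shift_distinguished _ hT (-(t:ℤ))
      refine τ.ext_V hT2 ?_ ?_
      · exact τ.iso_V ((shiftFunctorAdd' (DerivedCategory C) ((1:ℤ)-(t:ℤ)) (-1) (-(t:ℤ))
          (by ring)).app _).symm (τ.shift_V_neg_one ihV)
      · refine τ.iso_V ?_ hYp.2
        exact ((shiftFunctor (DerivedCategory C) (-(t:ℤ))).mapIso (e1 ≪≫ e2.symm) ≪≫
          (shiftFunctorCompIsoId (DerivedCategory C) (t:ℤ) (-(t:ℤ)) (by omega)).app _).symm

/-- Let `τ = (U, V)` be a t-structure on `D(A)` with `D(A)^{≤ -n} ⊆ U ⊆ D(A)^{≤ 0}` and let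
`Y = A ∩ H_τ`. If `K` is a complex `0 → Y^{-s} → ⋯ → Y^{-1} → Y^0 → 0` with all terms in `Y`,
then `K`, viewed as an object of `D(A)`, lies in
`δ^{[-s,0]} ∩ τ^{[-s,0]} = D(A)^{≤0} ∩ D(A)^{≥ -s} ∩ U ∩ U^⊥[1+s]` (with `U^⊥[1] = V`). -/
theorem stmt_5 (U V : Set (DerivedCategory C)) (τ : TSPair (DerivedCategory C) U V)
    (n : ℕ) (hUn : ∀ X : DerivedCategory C, natLE C (-(n : ℤ)) X → X ∈ U)
    (hU0 : ∀ X ∈ U, natLE C 0 X)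
    (s : ℕ) (K : CochainComplex C ℤ)
    (hKbdd : ∀ i : ℤ, (i < -(s : ℤ) ∨ 0 < i) → IsZero (K.X i))
    (hKY : ∀ i : ℤ, -(s : ℤ) ≤ i → i ≤ 0 → memY C U V (K.X i)) :
    natLE C 0 (DerivedCategory.Q.obj K) ∧ natGE C (-(s : ℤ)) (DerivedCategory.Q.obj K) ∧
      DerivedCategory.Q.obj K ∈ U ∧ ((DerivedCategory.Q.obj K)⟦-(s : ℤ)⟧ ∈ V) := by
  have hfac : ∀ k : ℤ, IsZero (K.X k) →
      IsZero ((DerivedCategory.homologyFunctor C k).obj (DerivedCategory.Q.obj K)) := by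
    intro k hk
    have h1 : K.ExactAt k := by
      rw [HomologicalComplex.exactAt_iff]
      exact ShortComplex.exact_of_isZero_X₂ _ hk
    have h2 : IsZero (K.homology k) :=
      (HomologicalComplex.exactAt_iff_isZero_homology K k).1 h1
    exact IsZero.of_iso h2 ((DerivedCategory.homologyFunctorFactors C k).app K)
  have hmain := main_induction C U V τ (s+1) K
    (fun i hi => hKbdd i (hi.imp (fun h => by push_cast at h ⊢; omega) id))
    (fun i ha hb => hKY i (by push_cast at ha ⊢; omega) hb)
  refine ⟨fun k hk => hfac k (hKbdd k (Or.inr hk)),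
    fun k hk => hfac k (hKbdd k (Or.inl hk)), hmain.1, ?_⟩
  rw [show -(s:ℤ) = 1 - ((s+1:ℕ):ℤ) by push_cast; ring]
  exact hmain.2
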